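/- Let μ ≥ 0 and n ∈ ℕ with n > μ²/4. Define d : Fin n type sequence by d_n = 2n and d_j = 2j + μ²/d_{j+1} for j = n−1 down to 1. Then for all 1 ≤ j ≤ n−1, 0 ≤ d_{j+1} − d_j ≤ 2. -/

import Mathlib

theorem stmt_5 (μ : ℝ) (hμ : 0 ≤ μ) (n : ℕ) (hn : μ ^ 2 / 4 < (n : ℝ))
    (d : ℕ → ℝ)
    (hdn : d n = 2 * n)
    (hrec : ∀ j : ℕ, 1 ≤ j → j < n → d j = 2 * j + μ ^ 2 / d (j + 1))
    (hpos : ∀ j : ℕ, 1 ≤ j → j ≤ n → 0 < d j) :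
    ∀ j : ℕ, 1 ≤ j → j ≤ n - 1 → 0 ≤ d (j + 1) - d j ∧ d (j + 1) - d j ≤ 2 := by
  have hn1 : 1 ≤ n := by
    by_contra h
    push_neg at h
    interval_cases n
    simp at hn
    nlinarith [sq_nonneg μ]
  have hμ4 : μ ^ 2 < 4 * n := by nlinarith
  have key : ∀ k : ℕ, ∀ j : ℕ, 1 ≤ j → j + 1 ≤ n → n - (j + 1) ≤ k →
      0 ≤ d (j + 1) - d j ∧ d (j + 1) - d j ≤ 2 := by
    intro k
    induction k with
    | zero =>
      intro j hj1 hjn hk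
      have hjn' : j + 1 = n := by omega
      have hjlt : j < n := by omega
      rw [hjn', hdn, hrec j hj1 hjlt, hjn', hdn]
      have hjcast : (j : ℝ) = (n : ℝ) - 1 := by
        have : (j : ℝ) + 1 = n := by exact_mod_cast congrArg (Nat.cast : ℕ → ℝ) hjn'
        linarith
      have hnpos : (0 : ℝ) < 2 * n := by positivity
      constructor
      · rw [hjcast]
        have : μ ^ 2 / (2 * n) ≤ 2 := by
          rw [div_le_iff₀ hnpos]; nlinarith
        linarith
      · rw [hjcast]
        have : 0 ≤ μ ^ 2 / (2 * n) := by positivity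
        linarith
    | succ k ih =>
      intro j hj1 hjn hk
      by_cases hcase : j + 1 = n
      · -- base case again
        have hjlt : j < n := by omega
        rw [hcase, hdn, hrec j hj1 hjlt, hcase, hdn]
        have hjcast : (j : ℝ) = (n : ℝ) - 1 := by
          have : (j : ℝ) + 1 = n := by exact_mod_cast congrArg (Nat.cast : ℕ → ℝ) hcase
          linarith
        have hnpos : (0 : ℝ) < 2 * n := by positivity
        constructor
        · rw [hjcast]
          have : μ ^ 2 / (2 * n) ≤ 2 := by
            rw [div_le_iff₀ hnpos]; nlinarith
          linarith
        · rw [hjcast]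
          have : 0 ≤ μ ^ 2 / (2 * n) := by positivity
          linarith
      · have hj2n : j + 2 ≤ n := by omega
        obtain ⟨ih1, ih2⟩ := ih (j + 1) (by omega) hj2n (by omega)
        have p1 : 0 < d (j + 1) := hpos _ (by omega) (by omega)
        have p2 : 0 < d (j + 2) := hpos _ (by omega) hj2n
        have e1 : d j = 2 * j + μ ^ 2 / d (j + 1) := hrec j hj1 (by omega)
        have e2 : d (j + 1) = 2 * (j + 1) + μ ^ 2 / d (j + 2) := by
          have := hrec (j + 1) (by omega) (by omega)
          push_cast at this ⊢
          convert this using 3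
        have hprod : μ ^ 2 ≤ d (j + 1) * d (j + 2) := by
          rw [e2]
          have : (2 * ((j : ℝ) + 1) + μ ^ 2 / d (j + 2)) * d (j + 2)
              = 2 * ((j : ℝ) + 1) * d (j + 2) + μ ^ 2 := by
            field_simp
          rw [this]
          have hjnn : (0 : ℝ) ≤ (j : ℝ) := Nat.cast_nonneg j
          nlinarith
        have hx : μ ^ 2 / d (j + 1) * d (j + 1) = μ ^ 2 := div_mul_cancel₀ _ (ne_of_gt p1)
        have hy : μ ^ 2 / d (j + 2) * d (j + 2) = μ ^ 2 := div_mul_cancel₀ _ (ne_of_gt p2)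
        have heq : d (j + 1) - d j = 2 + μ ^ 2 / d (j + 2) - μ ^ 2 / d (j + 1) := by
          rw [e1]
          nth_rewrite 1 [e2]
          ring
        have hxy : μ ^ 2 / d (j + 1) - μ ^ 2 / d (j + 2)
            = μ ^ 2 * (d (j + 2) - d (j + 1)) / (d (j + 1) * d (j + 2)) := by
          field_simp
        have h6 : μ ^ 2 / d (j + 1) - μ ^ 2 / d (j + 2) ≤ 2 := by
          rw [hxy, div_le_iff₀ (mul_pos p1 p2)]
          nlinarith [mul_le_mul_of_nonneg_left ih2 (sq_nonneg μ)]
        have h7 : 0 ≤ μ ^ 2 / d (j + 1) - μ ^ 2 / d (j + 2) := by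
          rw [hxy]
          have : 0 ≤ μ ^ 2 * (d (j + 2) - d (j + 1)) :=
            mul_nonneg (sq_nonneg μ) ih1
          positivity
        constructor <;> linarith
  intro j hj1 hjn
  exact key (n - (j + 1)) j hj1 (by omega) le_rfl
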